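/- Let G be an analytic graph on a Polish space X, let ℓ be a natural number, and let A ⊆ X be analytic with Φ(A,ℓ). Then there is a Borel set B ⊆ X with A ⊆ B and Φ(B,ℓ). -/
import Mathlib


open MeasureTheory

/-- A walk of length `m` in the graph given by the relation `Adj`. -/
def IsWalk {α : Type*} (Adj : α → α → Prop) (m : ℕ) (w : ℕ → α) : Prop :=
  ∀ j, j < m → Adj (w j) (w (j + 1))

/-- The set of lengths of walks from `u` to `v`. -/
def walkLens {α : Type*} (Adj : α → α → Prop) (u v : α) : Set ℕ :=
  {m | ∃ w : ℕ → α, w 0 = u ∧ w m = v ∧ IsWalk Adj m w}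

/-- `Φ(A,k)`: every odd-length walk in `G` with both endpoints in `A`
has length at most `2k - 1`. -/
def PhiProp {X : Type*} (G : X → X → Prop) (A : Set X) (k : ℕ) : Prop :=
  ∀ (m : ℕ) (w : ℕ → X), Odd m → IsWalk G m w → w 0 ∈ A → w m ∈ A → m ≤ 2 * k - 1

lemma anal_inter {α : Type*} [TopologicalSpace α] [T2Space α] {s t : Set α}
    (hs : AnalyticSet s) (ht : AnalyticSet t) : AnalyticSet (s ∩ t) := by
  have : s ∩ t = ⋂ b : Bool, (if b then s else t) := by
    ext x; simp [Bool.forall_bool, and_comm]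
  rw [this]
  exact AnalyticSet.iInter fun b => by cases b <;> simpa

lemma anal_union {α : Type*} [TopologicalSpace α] {s t : Set α}
    (hs : AnalyticSet s) (ht : AnalyticSet t) : AnalyticSet (s ∪ t) := by
  have : s ∪ t = ⋃ b : Bool, (if b then s else t) := by
    ext x; simp [Bool.exists_bool, or_comm]
  rw [this]
  exact AnalyticSet.iUnion fun b => by cases b <;> simpa

lemma anal_comp {X : Type} [TopologicalSpace X] [PolishSpace X]
    {R S : Set (X × X)} (hR : AnalyticSet R) (hS : AnalyticSet S) :
    AnalyticSet {p : X × X | ∃ z, (p.1, z) ∈ R ∧ (z, p.2) ∈ S} := by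
  have h1 : AnalyticSet {q : X × X × X | (q.1, q.2.1) ∈ R} :=
    hR.preimage (by fun_prop : Continuous fun q : X × X × X => (q.1, q.2.1))
  have h2 : AnalyticSet {q : X × X × X | (q.2.1, q.2.2) ∈ S} :=
    hS.preimage (by fun_prop : Continuous fun q : X × X × X => (q.2.1, q.2.2))
  have := (anal_inter h1 h2).image_of_continuous
    (by fun_prop : Continuous fun q : X × X × X => (q.1, q.2.2))
  convert this using 1
  ext ⟨u, v⟩
  constructor
  · rintro ⟨z, hz1, hz2⟩; exact ⟨(u, z, v), ⟨hz1, hz2⟩, rfl⟩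
  · rintro ⟨⟨a, b, c⟩, ⟨h1, h2⟩, h3⟩
    simp only [Prod.mk.injEq] at h3
    exact ⟨b, by rw [← h3.1]; exact h1, by rw [← h3.2]; exact h2⟩

lemma anal_walkRel {X : Type} [TopologicalSpace X] [PolishSpace X]
    [MeasurableSpace X] [BorelSpace X]
    (G : X → X → Prop) (hana : AnalyticSet {p : X × X | G p.1 p.2}) (m : ℕ) :
    AnalyticSet {p : X × X | ∃ w : ℕ → X, w 0 = p.1 ∧ w m = p.2 ∧ IsWalk G m w} := by
  induction m with
  | zero =>
    have : {p : X × X | ∃ w : ℕ → X, w 0 = p.1 ∧ w 0 = p.2 ∧ IsWalk G 0 w}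
        = {p : X × X | p.1 = p.2} := by
      ext ⟨u, v⟩
      constructor
      · rintro ⟨w, h1, h2, -⟩; exact h1.symm.trans h2
      · rintro (rfl : u = v); exact ⟨fun _ => u, rfl, rfl, fun j hj => absurd hj (Nat.not_lt_zero j)⟩
    rw [this]
    exact (isClosed_diagonal (X := X)).measurableSet.analyticSet
  | succ m ih =>
    have key : {p : X × X | ∃ w : ℕ → X, w 0 = p.1 ∧ w (m + 1) = p.2 ∧ IsWalk G (m + 1) w}
        = {p : X × X | ∃ z,
            (p.1, z) ∈ {q : X × X | ∃ w : ℕ → X, w 0 = q.1 ∧ w m = q.2 ∧ IsWalk G m w} ∧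
            (z, p.2) ∈ {q : X × X | G q.1 q.2}} := by
      ext ⟨u, v⟩
      constructor
      · rintro ⟨w, h0, hm, hw⟩
        exact ⟨w m, ⟨w, h0, rfl, fun j hj => hw j (Nat.lt_succ_of_lt hj)⟩,
          hm ▸ hw m (Nat.lt_succ_self m)⟩
      · rintro ⟨z, ⟨w, h0, hm, hw⟩, hG⟩
        refine ⟨fun j => if j ≤ m then w j else v, by simpa using h0, by simp, ?_⟩
        intro j hj
        dsimp only
        rcases Nat.lt_or_ge j m with h | h
        · rw [if_pos (Nat.le_of_lt h), if_pos (Nat.succ_le_of_lt h)]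
          exact hw j h
        · have hjm : j = m := Nat.le_antisymm (Nat.lt_succ_iff.mp hj) h
          subst hjm
          rw [if_pos le_rfl, if_neg (by omega), hm]
          exact hG
    rw [key]
    exact anal_comp ih hana

/-- If `G` is an analytic graph on a Polish space `X`, `ℓ : ℕ`, and `A ⊆ X`
is analytic with `Φ(A,ℓ)`, then there is a Borel `B ⊇ A` with `Φ(B,ℓ)`. -/
theorem stmt4 {X : Type} [TopologicalSpace X] [PolishSpace X]
    [MeasurableSpace X] [BorelSpace X]
    (G : X → X → Prop) (hsym : Symmetric G) (hirr : Irreflexive G)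
    (hana : AnalyticSet {p : X × X | G p.1 p.2}) (ℓ : ℕ)
    (A : Set X) (hA : AnalyticSet A) (hPhi : PhiProp G A ℓ) :
    ∃ B : Set X, MeasurableSet B ∧ A ⊆ B ∧ PhiProp G B ℓ := by
  classical
  set W : ℕ → Set (X × X) := fun m =>
    {p | (Odd m ∧ 2 * ℓ - 1 < m) ∧ ∃ w : ℕ → X, w 0 = p.1 ∧ w m = p.2 ∧ IsWalk G m w}
    with hWdef
  have hW : ∀ m, AnalyticSet (W m) := by
    intro m
    by_cases h : Odd m ∧ 2 * ℓ - 1 < m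
    · have : W m = {p : X × X | ∃ w : ℕ → X, w 0 = p.1 ∧ w m = p.2 ∧ IsWalk G m w} := by
        ext p; simp [hWdef, h]
      rw [this]; exact anal_walkRel G hana m
    · have : W m = ∅ := by
        ext p; simp only [hWdef, Set.mem_setOf_eq, Set.mem_empty_iff_false, iff_false]
        rintro ⟨h1, -⟩; exact h h1
      rw [this]; exact analyticSet_empty
  set D : Set (X × X) := ⋃ m, W m with hDdef
  have hD : AnalyticSet D := AnalyticSet.iUnion hW
  have hAD : ∀ x ∈ A, ∀ y ∈ A, (x, y) ∉ D := by
    intro x hx y hy hxy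
    rw [hDdef, Set.mem_iUnion] at hxy
    obtain ⟨m, ⟨hodd, hlt⟩, w, h0, hm, hw⟩ := hxy
    have := hPhi m w hodd hw (h0 ▸ hx) (hm ▸ hy)
    omega
  -- first separation
  have anal_sides : ∀ (C : Set X), AnalyticSet C →
      AnalyticSet {x | ∃ y ∈ C, (x, y) ∈ D ∨ (y, x) ∈ D} := by
    intro C hC
    have hsw : AnalyticSet (Prod.swap ⁻¹' D : Set (X × X)) :=
      hD.preimage continuous_swap
    have h1 : AnalyticSet ((D ∪ Prod.swap ⁻¹' D) ∩ (Prod.snd ⁻¹' C)) :=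
      anal_inter (anal_union hD hsw) (hC.preimage continuous_snd)
    have himg := h1.image_of_continuous (continuous_fst : Continuous fun p : X × X => p.1)
    convert himg using 1
    ext x
    constructor
    · rintro ⟨y, hy, h⟩
      exact ⟨(x, y), ⟨by simpa [Prod.swap] using h, hy⟩, rfl⟩
    · rintro ⟨⟨a, b⟩, ⟨h, hb⟩, rfl⟩
      exact ⟨b, hb, by simpa [Prod.swap] using h⟩
  have hD2 : AnalyticSet {x | ∃ y ∈ A, (x, y) ∈ D ∨ (y, x) ∈ D} := anal_sides A hA
  have hdisj1 : Disjoint A {x | ∃ y ∈ A, (x, y) ∈ D ∨ (y, x) ∈ D} := by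
    rw [Set.disjoint_left]
    rintro x hx ⟨y, hy, h | h⟩
    · exact hAD x hx y hy h
    · exact hAD y hy x hx h
  obtain ⟨B₁, hAB₁, hdisjD2B₁, hB₁meas⟩ := hA.measurablySeparable hD2 hdisj1
  -- second separation
  have hE : AnalyticSet {x | ∃ y ∈ B₁, (x, y) ∈ D ∨ (y, x) ∈ D} :=
    anal_sides B₁ hB₁meas.analyticSet
  have hdisj2 : Disjoint A {x | ∃ y ∈ B₁, (x, y) ∈ D ∨ (y, x) ∈ D} := by
    rw [Set.disjoint_left]
    rintro x hx ⟨y, hy, h⟩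
    have hyD2 : y ∈ {x | ∃ y ∈ A, (x, y) ∈ D ∨ (y, x) ∈ D} := by
      refine ⟨x, hx, ?_⟩
      rcases h with h | h
      · exact Or.inr h
      · exact Or.inl h
    exact Set.disjoint_left.mp hdisjD2B₁ hyD2 hy
  obtain ⟨B₂, hAB₂, hdisjEB₂, hB₂meas⟩ := hA.measurablySeparable hE hdisj2
  refine ⟨B₁ ∩ B₂, hB₁meas.inter hB₂meas, Set.subset_inter hAB₁ hAB₂, ?_⟩
  intro m w hodd hw h0 hm
  by_contra hgt
  push_neg at hgt
  have hDmem : (w 0, w m) ∈ D := by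
    rw [hDdef, Set.mem_iUnion]
    exact ⟨m, ⟨hodd, hgt⟩, w, rfl, rfl, hw⟩
  have hwE : w 0 ∈ {x | ∃ y ∈ B₁, (x, y) ∈ D ∨ (y, x) ∈ D} :=
    ⟨w m, hm.1, Or.inl hDmem⟩
  exact Set.disjoint_left.mp hdisjEB₂ hwE h0.2
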